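/- Let X = (ℝ×{0}) ∪ ({0}×(−∞,1]) ⊂ ℝ² with metric d(x,y) = max{|x₁−y₁|, |x₂−y₂|} and 1-dimensional Hausdorff measure μ. Define u(x) = x₂ if 0 < x₂ ≤ 1 and u(x) = 0 otherwise. Then for 0 ≤ α ≤ 1, the noncentered fractional maximal function satisfies 𝓜̃_α u(0,0) ≤ 1/3 while 𝓜̃_α u(x) ≥ 1/2 whenever x₂ > 0; in particular 𝓜̃_α u is not continuous at the origin even though u is Lipschitz. -/

import Mathlib

open MeasureTheory Metric Set
open scoped ENNReal

/-- The cross-shaped set `X = (ℝ×{0}) ∪ ({0}×(−∞,1]) ⊂ ℝ²`, where `ℝ²` carries the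
sup-metric (the product metric on `ℝ × ℝ`). -/
def Cross : Set (ℝ × ℝ) := {p | p.2 = 0 ∨ (p.1 = 0 ∧ p.2 ≤ 1)}

/-- The function `u(x) = x₂` if `0 < x₂ ≤ 1`, `u(x) = 0` otherwise. -/
noncomputable def uCross (p : Cross) : ℝ :=
  if 0 < (p : ℝ × ℝ).2 ∧ (p : ℝ × ℝ).2 ≤ 1 then (p : ℝ × ℝ).2 else 0

/-- The noncentered fractional maximal function
`𝓜̃_α u(x) = sup_{B(z,r) ∋ x} r^α ⨍_{B(z,r)} |u| dμ`. -/
noncomputable def ncMax {X : Type*} [MetricSpace X] [MeasurableSpace X]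
    (μ : Measure X) (α : ℝ) (u : X → ℝ) (x : X) : ℝ :=
  sSup {t : ℝ | ∃ (z : X) (r : ℝ), 0 < r ∧ x ∈ ball z r ∧
    t = r ^ α * ⨍ y in ball z r, |u y| ∂μ}

noncomputable def hmap : ℝ → Cross := fun t => ⟨(t, 0), Or.inl rfl⟩
noncomputable def wmap : ℝ → Cross := fun t => ⟨(0, min t 1), Or.inr ⟨rfl, min_le_right _ _⟩⟩

lemma continuous_hmap : Continuous hmap := by
  apply Continuous.subtype_mk; fun_prop

lemma continuous_wmap : Continuous wmap := by
  apply Continuous.subtype_mk; fun_prop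

lemma measurable_hmap : Measurable hmap := continuous_hmap.measurable
lemma measurable_wmap : Measurable wmap := continuous_wmap.measurable

noncomputable def nu : Measure Cross :=
  (volume : Measure ℝ).map hmap + ((volume : Measure ℝ).restrict (Iic 1)).map wmap

lemma nu_eq : (μH[1] : Measure Cross) = nu := by
  ext S hS
  have hRHS : nu S = volume (hmap ⁻¹' S) + volume (wmap ⁻¹' S ∩ Iic 1) := by
    simp [nu, Measure.map_apply measurable_hmap hS, Measure.map_apply measurable_wmap hS,
      Measure.restrict_apply (measurable_wmap hS)]
  have hcoe : μH[1] (S : Set Cross) = μH[1] ((Subtype.val : Cross → ℝ × ℝ) '' S) :=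
    (isometry_subtype_coe.hausdorffMeasure_image (Or.inl one_pos.le) S).symm
  set E : Set (ℝ × ℝ) := Subtype.val '' S with hE
  have hEc : ∀ p ∈ E, p ∈ Cross := by
    rintro p ⟨y, hyS, rfl⟩; exact y.2
  have hmeasL : MeasurableSet {p : ℝ × ℝ | p.1 = 0} :=
    (isClosed_eq continuous_fst continuous_const).measurableSet
  have hsplit : μH[1] (E ∩ {p : ℝ × ℝ | p.1 = 0}) + μH[1] (E \ {p : ℝ × ℝ | p.1 = 0}) = μH[1] E :=
    measure_inter_add_diff E hmeasL
  -- vertical piece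
  have hEv : E ∩ {p : ℝ × ℝ | p.1 = 0} = (fun t : ℝ => ((0:ℝ), t)) '' {t : ℝ | ((0:ℝ), t) ∈ E} := by
    ext p
    constructor
    · rintro ⟨hp, h0⟩
      have hpe : ((0:ℝ), p.2) = p := Prod.ext (by exact h0.symm) rfl
      exact ⟨p.2, by rw [mem_setOf_eq, hpe]; exact hp, hpe⟩
    · rintro ⟨t, ht, rfl⟩
      exact ⟨ht, rfl⟩
  have hIv : Isometry (fun t : ℝ => ((0:ℝ), t)) := by
    apply Isometry.of_dist_eq; intro a b; simp [Prod.dist_eq, Real.dist_eq]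
  have hIh : Isometry (fun t : ℝ => (t, (0:ℝ))) := by
    apply Isometry.of_dist_eq; intro a b; simp [Prod.dist_eq, Real.dist_eq]
  have hv : μH[1] (E ∩ {p : ℝ × ℝ | p.1 = 0}) = volume {t : ℝ | ((0:ℝ), t) ∈ E} := by
    rw [hEv, hIv.hausdorffMeasure_image (Or.inl one_pos.le), MeasureTheory.hausdorffMeasure_real]
  -- horizontal piece
  have hEh : E \ {p : ℝ × ℝ | p.1 = 0} =
      (fun t : ℝ => (t, (0:ℝ))) '' {t : ℝ | t ≠ 0 ∧ (t, (0:ℝ)) ∈ E} := by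
    ext p
    constructor
    · rintro ⟨hp, h0⟩
      have h0' : p.1 ≠ 0 := h0
      have hp2 : p.2 = 0 := by
        rcases hEc p hp with h | h
        · exact h
        · exact absurd h.1 h0'
      have hpe : (p.1, (0:ℝ)) = p := Prod.ext rfl hp2.symm
      exact ⟨p.1, ⟨h0', by rw [mem_setOf_eq] at *; rw [hpe]; exact hp⟩, hpe⟩
    · rintro ⟨t, ⟨ht0, htE⟩, rfl⟩
      exact ⟨htE, ht0⟩
  have hh : μH[1] (E \ {p : ℝ × ℝ | p.1 = 0}) = volume {t : ℝ | (t, (0:ℝ)) ∈ E} := by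
    rw [hEh, hIh.hausdorffMeasure_image (Or.inl one_pos.le), MeasureTheory.hausdorffMeasure_real]
    have : {t : ℝ | t ≠ 0 ∧ (t, (0:ℝ)) ∈ E} = {t : ℝ | (t, (0:ℝ)) ∈ E} \ {0} := by
      ext t; simp [and_comm, mem_diff]
    rw [this, measure_diff_null (measure_singleton 0)]
  -- identify the two real sets with preimages
  have hsetv : {t : ℝ | ((0:ℝ), t) ∈ E} = wmap ⁻¹' S ∩ Iic 1 := by
    ext t
    constructor
    · intro ht
      have htc : ((0:ℝ), t) ∈ Cross := hEc _ ht
      have ht1 : t ≤ 1 := by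
        rcases htc with h | h
        · simp at h; simp [h]
        · exact h.2
      refine ⟨?_, ht1⟩
      obtain ⟨y, hyS, hy⟩ := ht
      have : wmap t = y := by
        apply Subtype.ext
        rw [hy]
        simp [wmap, min_eq_left ht1]
      rw [mem_preimage, this]; exact hyS
    · rintro ⟨htS, ht1⟩
      refine ⟨wmap t, htS, ?_⟩
      simp [wmap, min_eq_left (mem_Iic.mp ht1)]
  have hseth : {t : ℝ | (t, (0:ℝ)) ∈ E} = hmap ⁻¹' S := by
    ext t
    constructor
    · rintro ⟨y, hyS, hy⟩
      have : hmap t = y := by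
        apply Subtype.ext; rw [hy]; simp [hmap]
      rw [mem_preimage, this]; exact hyS
    · intro ht
      exact ⟨hmap t, ht, rfl⟩
  rw [hRHS, hcoe, ← hsplit, hv, hh, hsetv, hseth, add_comm]

lemma measurable_snd_cross : Measurable (fun p : Cross => (p : ℝ × ℝ).2) :=
  (continuous_snd.comp continuous_subtype_val).measurable

lemma measurable_uCross : Measurable uCross := by
  have hset : MeasurableSet {p : Cross | 0 < (p : ℝ × ℝ).2 ∧ (p : ℝ × ℝ).2 ≤ 1} := by
    have : {p : Cross | 0 < (p : ℝ × ℝ).2 ∧ (p : ℝ × ℝ).2 ≤ 1}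
        = (fun p : Cross => (p : ℝ × ℝ).2) ⁻¹' Ioc 0 1 := by
      ext p; simp [mem_Ioc]
    rw [this]
    exact measurable_snd_cross measurableSet_Ioc
  exact Measurable.ite hset measurable_snd_cross measurable_const

lemma measurable_absu : Measurable (fun y : Cross => |uCross y|) :=
  measurable_uCross.abs

lemma nu_apply {S : Set Cross} (hS : MeasurableSet S) :
    nu S = volume (hmap ⁻¹' S) + volume (wmap ⁻¹' S ∩ Iic 1) := by
  simp [nu, Measure.map_apply measurable_hmap hS, Measure.map_apply measurable_wmap hS,
    Measure.restrict_apply (measurable_wmap hS)]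

lemma integral_ball (z : Cross) (r : ℝ) :
    ∫ y in ball z r, |uCross y| ∂nu
      = ∫ t in (wmap ⁻¹' ball z r ∩ Iic 1) ∩ Ioi 0, t ∂volume := by
  set B := ball z r
  have hB : MeasurableSet B := measurableSet_ball
  have hres : nu.restrict B = (volume.map hmap).restrict B
      + (((volume : Measure ℝ).restrict (Iic 1)).map wmap).restrict B := by
    rw [nu, Measure.restrict_add]
  have hae : (fun y : Cross => |uCross y|) =ᵐ[(volume.map hmap).restrict B] 0 := by
    apply ae_restrict_of_ae
    have hmeas : MeasurableSet {y : Cross | |uCross y| ≠ 0} :=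
      (measurable_absu (measurableSet_singleton (0:ℝ))).compl
    have h0 : (volume.map hmap) {y : Cross | ¬ |uCross y| = (0 : Cross → ℝ) y} = 0 := by
      have hset : {y : Cross | ¬ |uCross y| = (0 : Cross → ℝ) y} = {y : Cross | |uCross y| ≠ 0} := by
        ext y; simp
      rw [hset, Measure.map_apply measurable_hmap hmeas]
      have hpre : hmap ⁻¹' {y : Cross | |uCross y| ≠ 0} = (∅ : Set ℝ) := by
        ext t; simp [hmap, uCross]
      rw [hpre]; exact measure_empty
    exact ae_iff.mpr h0
  have h1int : Integrable (fun y : Cross => |uCross y|) ((volume.map hmap).restrict B) :=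
    (integrable_zero _ _ _).congr hae.symm
  have hwB : MeasurableSet (wmap ⁻¹' B) := measurable_wmap hB
  have h2meas : ((((volume : Measure ℝ).restrict (Iic 1)).map wmap).restrict B)
      = Measure.map wmap ((volume : Measure ℝ).restrict (wmap ⁻¹' B ∩ Iic 1)) := by
    rw [Measure.restrict_map measurable_wmap hB, Measure.restrict_restrict hwB]
  have h2eq : ∫ y in B, |uCross y| ∂(((volume : Measure ℝ).restrict (Iic 1)).map wmap)
      = ∫ t in wmap ⁻¹' B ∩ Iic 1, |uCross (wmap t)| ∂volume := by
    rw [show ∫ y in B, |uCross y| ∂(((volume : Measure ℝ).restrict (Iic 1)).map wmap)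
        = ∫ y, |uCross y| ∂(Measure.map wmap ((volume : Measure ℝ).restrict (wmap ⁻¹' B ∩ Iic 1)))
        from by rw [← h2meas]]
    exact integral_map measurable_wmap.aemeasurable measurable_absu.aestronglyMeasurable
  have hSm : MeasurableSet (wmap ⁻¹' B ∩ Iic 1) := hwB.inter measurableSet_Iic
  have hcongr : ∫ t in wmap ⁻¹' B ∩ Iic 1, |uCross (wmap t)| ∂volume
      = ∫ t in wmap ⁻¹' B ∩ Iic 1, (Ioi (0:ℝ)).indicator (fun s => s) t ∂volume := by
    apply setIntegral_congr_fun hSm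
    intro t ht
    have ht1 : t ≤ 1 := ht.2
    by_cases h : 0 < t
    · simp [uCross, wmap, min_eq_left ht1, h, ht1, abs_of_pos h, indicator_apply, mem_Ioi]
    · simp [uCross, wmap, min_eq_left ht1, h, indicator_apply, mem_Ioi]
  have h2int : Integrable (fun y : Cross => |uCross y|)
      ((((volume : Measure ℝ).restrict (Iic 1)).map wmap).restrict B) := by
    rw [h2meas]
    rw [integrable_map_measure measurable_absu.aestronglyMeasurable measurable_wmap.aemeasurable]
    -- integrable (|uCross| ∘ wmap) on finite measure set, bounded by 1
    apply Integrable.mono' (g := fun _ : ℝ => (1:ℝ))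
    · apply integrable_const_iff.2
      right
      refine ⟨?_⟩
      rw [Measure.restrict_apply_univ]
      calc volume (wmap ⁻¹' B ∩ Iic 1) ≤ volume (Ioo (z.1.2 - r) (z.1.2 + r)) := by
            apply measure_mono
            rintro t ⟨htB, ht1⟩
            have : dist (wmap t) z < r := htB
            rw [Subtype.dist_eq, Prod.dist_eq] at this
            have h2 : dist (min t 1) z.1.2 < r := lt_of_le_of_lt (le_max_right _ _) this
            rw [min_eq_left (mem_Iic.mp ht1), Real.dist_eq, abs_lt] at h2
            constructor <;> [linarith [h2.1]; linarith [h2.2]]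
        _ < ⊤ := by simp [lt_top_iff_ne_top]
    · exact (measurable_absu.comp measurable_wmap).aestronglyMeasurable
    · apply ae_of_all
      intro t
      simp only [Function.comp_apply, Real.norm_eq_abs, abs_abs]
      rw [uCross]
      split
      · rename_i hcond
        rw [abs_of_pos hcond.1]; exact hcond.2
      · simp
  calc ∫ y in B, |uCross y| ∂nu
      = ∫ y, |uCross y| ∂((volume.map hmap).restrict B
          + ((((volume : Measure ℝ).restrict (Iic 1)).map wmap).restrict B)) := by rw [← hres]
    _ = (∫ y, |uCross y| ∂((volume.map hmap).restrict B))
        + ∫ y, |uCross y| ∂((((volume : Measure ℝ).restrict (Iic 1)).map wmap).restrict B) :=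
        integral_add_measure h1int h2int
    _ = 0 + ∫ t in wmap ⁻¹' B ∩ Iic 1, |uCross (wmap t)| ∂volume := by
        rw [integral_eq_zero_of_ae hae, h2eq]
    _ = ∫ t in (wmap ⁻¹' B ∩ Iic 1) ∩ Ioi 0, t ∂volume := by
        rw [zero_add, hcongr, setIntegral_indicator measurableSet_Ioi]

lemma mem_hpre {z : Cross} {r t : ℝ} :
    t ∈ hmap ⁻¹' ball z r ↔ max |t - (z:ℝ×ℝ).1| |(z:ℝ×ℝ).2| < r := by
  rw [mem_preimage, mem_ball, Subtype.dist_eq, Prod.dist_eq]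
  simp [hmap, Real.dist_eq]

lemma mem_wpre {z : Cross} {r t : ℝ} (ht : t ≤ 1) :
    t ∈ wmap ⁻¹' ball z r ↔ max |(z:ℝ×ℝ).1| |t - (z:ℝ×ℝ).2| < r := by
  rw [mem_preimage, mem_ball, Subtype.dist_eq, Prod.dist_eq]
  simp [wmap, Real.dist_eq, min_eq_left ht, abs_sub_comm (0:ℝ)]

lemma hpre_eq {z : Cross} {r : ℝ} (h2 : |(z:ℝ×ℝ).2| < r) :
    hmap ⁻¹' ball z r = Ioo ((z:ℝ×ℝ).1 - r) ((z:ℝ×ℝ).1 + r) := by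
  ext t
  rw [mem_hpre, max_lt_iff, mem_Ioo]
  constructor
  · rintro ⟨ha, _⟩
    rw [abs_lt] at ha
    constructor <;> linarith [ha.1, ha.2]
  · rintro ⟨ha, hb⟩
    exact ⟨abs_lt.mpr ⟨by linarith, by linarith⟩, h2⟩

lemma hpre_empty {z : Cross} {r : ℝ} (h2 : r ≤ |(z:ℝ×ℝ).2|) :
    hmap ⁻¹' ball z r = ∅ := by
  ext t
  rw [mem_hpre, max_lt_iff]
  simp only [mem_empty_iff_false, iff_false]
  rintro ⟨_, hb⟩
  linarith

lemma wpre_eq {z : Cross} {r : ℝ} (h1 : |(z:ℝ×ℝ).1| < r) :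
    wmap ⁻¹' ball z r ∩ Iic 1 = Ioo ((z:ℝ×ℝ).2 - r) ((z:ℝ×ℝ).2 + r) ∩ Iic 1 := by
  ext t
  simp only [mem_inter_iff, mem_Iic, mem_Ioo]
  constructor
  · rintro ⟨ha, hb⟩
    rw [mem_wpre hb, max_lt_iff] at ha
    have := abs_lt.mp ha.2
    exact ⟨⟨by linarith [this.1], by linarith [this.2]⟩, hb⟩
  · rintro ⟨⟨ha, hb⟩, hc⟩
    refine ⟨(mem_wpre hc).mpr ?_, hc⟩
    rw [max_lt_iff]
    exact ⟨h1, abs_lt.mpr ⟨by linarith, by linarith⟩⟩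

lemma wpre_subset {z : Cross} {r : ℝ} :
    wmap ⁻¹' ball z r ∩ Iic 1 ⊆ Ioo ((z:ℝ×ℝ).2 - r) ((z:ℝ×ℝ).2 + r) := by
  rintro t ⟨ha, hb⟩
  rw [mem_Iic] at hb
  rw [mem_wpre hb, max_lt_iff] at ha
  have := abs_lt.mp ha.2
  exact ⟨by linarith [this.1], by linarith [this.2]⟩

lemma hpre_subset {z : Cross} {r : ℝ} :
    hmap ⁻¹' ball z r ⊆ Ioo ((z:ℝ×ℝ).1 - r) ((z:ℝ×ℝ).1 + r) := by
  intro t ht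
  rw [mem_hpre, max_lt_iff] at ht
  have := abs_lt.mp ht.1
  exact ⟨by linarith [this.1], by linarith [this.2]⟩

lemma nu_ball_ne_top (z : Cross) {r : ℝ} (hr : 0 < r) : nu (ball z r) ≠ ⊤ := by
  have hle : nu (ball z r) ≤ volume (Ioo ((z:ℝ×ℝ).1 - r) ((z:ℝ×ℝ).1 + r))
      + volume (Ioo ((z:ℝ×ℝ).2 - r) ((z:ℝ×ℝ).2 + r)) := by
    rw [nu_apply measurableSet_ball]
    exact add_le_add (measure_mono hpre_subset) (measure_mono wpre_subset)
  refine ne_top_of_le_ne_top ?_ hle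
  rw [Real.volume_Ioo, Real.volume_Ioo]
  exact ENNReal.add_ne_top.2 ⟨ENNReal.ofReal_ne_top, ENNReal.ofReal_ne_top⟩

lemma integral_Ioc_id {b : ℝ} (hb : 0 ≤ b) : ∫ t in Ioc 0 b, t ∂volume = b^2/2 := by
  rw [← intervalIntegral.integral_of_le hb, integral_id]
  norm_num

lemma S_measurable (z : Cross) (r : ℝ) :
    MeasurableSet ((wmap ⁻¹' ball z r ∩ Iic 1) ∩ Ioi 0) :=
  ((measurable_wmap measurableSet_ball).inter measurableSet_Iic).inter measurableSet_Ioi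

lemma value_le_third {α : ℝ} (hα0 : 0 ≤ α) (hα1 : α ≤ 1) (z : Cross) (r : ℝ) (hr : 0 < r)
    (hx : (⟨(0,0), Or.inl rfl⟩ : Cross) ∈ ball z r) :
    r ^ α * ⨍ y in ball z r, |uCross y| ∂nu ≤ 1 / 3 := by
  have hd : dist (⟨(0,0), Or.inl rfl⟩ : Cross) z < r := mem_ball.mp hx
  rw [Subtype.dist_eq, Prod.dist_eq, max_lt_iff] at hd
  have h1 : |(z:ℝ×ℝ).1| < r := by
    have := hd.1; rwa [Real.dist_eq, abs_sub_comm, sub_zero] at this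
  have h2 : |(z:ℝ×ℝ).2| < r := by
    have := hd.2; rwa [Real.dist_eq, abs_sub_comm, sub_zero] at this
  set z₁ := (z:ℝ×ℝ).1 with hz1
  set z₂ := (z:ℝ×ℝ).2 with hz2
  have hz2le : z₂ ≤ 1 := by
    rcases z.2 with h | h
    · rw [hz2, h]; norm_num
    · exact h.2
  have habs2 := abs_lt.mp h2
  set b := min (z₂ + r) 1 with hbdef
  have hb0 : 0 < b := lt_min (by linarith [habs2.1]) one_pos
  have hb1 : b ≤ 1 := min_le_right _ _
  have hb2r : b ≤ z₂ + r := min_le_left _ _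
  have hz2r : z₂ < r := lt_of_le_of_lt (le_abs_self _) h2
  -- measure lower bound
  have hsub : Ioo (z₂ - r) b ⊆ wmap ⁻¹' ball z r ∩ Iic 1 := by
    rw [wpre_eq h1]
    rintro t ⟨ha, hb'⟩
    exact ⟨⟨ha, lt_of_lt_of_le hb' hb2r⟩, le_of_lt (lt_of_lt_of_le hb' hb1)⟩
  have hge : ENNReal.ofReal (2*r) + ENNReal.ofReal (b - (z₂ - r)) ≤ nu (ball z r) := by
    rw [nu_apply measurableSet_ball]
    apply add_le_add
    · rw [hpre_eq h2, Real.volume_Ioo]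
      apply le_of_eq; congr 1; ring
    · calc ENNReal.ofReal (b - (z₂ - r)) = volume (Ioo (z₂ - r) b) := (Real.volume_Ioo).symm
        _ ≤ _ := measure_mono hsub
  set m := (nu (ball z r)).toReal with hmdef
  have hfin := nu_ball_ne_top z hr
  have hm : 2*r + (b - (z₂ - r)) ≤ m := by
    have := ENNReal.toReal_mono hfin hge
    rwa [← ENNReal.ofReal_add (by linarith) (by linarith),
      ENNReal.toReal_ofReal (by linarith)] at this
  have hm2 : 2*r + b ≤ m := by linarith
  have hmpos : 0 < m := by linarith
  -- integral bound
  have hSsub : (wmap ⁻¹' ball z r ∩ Iic 1) ∩ Ioi 0 ⊆ Ioc 0 b := by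
    rintro t ⟨htw, ht0⟩
    have h1t := wpre_subset htw
    have ht1 : t ≤ 1 := htw.2
    exact ⟨ht0, le_min (le_of_lt h1t.2) ht1⟩
  have hI0 : 0 ≤ ∫ t in (wmap ⁻¹' ball z r ∩ Iic 1) ∩ Ioi 0, t ∂volume :=
    setIntegral_nonneg (S_measurable z r) fun t ht => le_of_lt ht.2
  have hIle : ∫ t in (wmap ⁻¹' ball z r ∩ Iic 1) ∩ Ioi 0, t ∂volume ≤ b^2/2 := by
    calc ∫ t in (wmap ⁻¹' ball z r ∩ Iic 1) ∩ Ioi 0, t ∂volume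
        ≤ ∫ t in Ioc 0 b, t ∂volume :=
          setIntegral_mono_set (continuous_id.integrableOn_Ioc)
            ((ae_restrict_iff' measurableSet_Ioc).2 (ae_of_all _ fun x hx => le_of_lt hx.1))
            (HasSubset.Subset.eventuallyLE hSsub)
      _ = b^2/2 := integral_Ioc_id hb0.le
  rw [setAverage_eq, integral_ball, smul_eq_mul]
  set I := ∫ t in (wmap ⁻¹' ball z r ∩ Iic 1) ∩ Ioi 0, t ∂volume
  have hrpow0 : 0 ≤ r^α := Real.rpow_nonneg hr.le α
  have hinv : m⁻¹ ≤ (2*r+b)⁻¹ := inv_anti₀ (by linarith) hm2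
  have hstep : m⁻¹ * I ≤ (2*r+b)⁻¹ * (b^2/2) :=
    mul_le_mul hinv hIle hI0 (inv_nonneg.mpr (by linarith))
  calc r^α * (m⁻¹ * I) ≤ r^α * ((2*r+b)⁻¹ * (b^2/2)) := mul_le_mul_of_nonneg_left hstep hrpow0
    _ = (r^α * (b^2/2)) * (2*r+b)⁻¹ := by ring
    _ ≤ 1/3 := by
        rw [← div_eq_mul_inv, div_le_iff₀ (by linarith)]
        rcases le_total r 1 with hc | hc
        · have hra : r^α ≤ 1 := Real.rpow_le_one hr.le hc hα0
          have hb2r' : b ≤ 2*r := by linarith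
          nlinarith [mul_le_mul_of_nonneg_right hra (by positivity : (0:ℝ) ≤ b^2/2),
            sq_nonneg b, hb0, hb1, hb2r']
        · have hra : r^α ≤ r := by
            have := Real.rpow_le_rpow_of_exponent_le hc hα1
            rwa [Real.rpow_one] at this
          have hbsq : b^2 ≤ 1 := by nlinarith
          nlinarith [mul_le_mul_of_nonneg_right hra (by positivity : (0:ℝ) ≤ b^2/2),
            mul_le_mul_of_nonneg_left hbsq (by linarith : (0:ℝ) ≤ r/2), hb0, hr]

lemma value_le_two {α : ℝ} (hα0 : 0 ≤ α) (hα1 : α ≤ 1) (z : Cross) (r : ℝ) (hr : 0 < r) :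
    r ^ α * ⨍ y in ball z r, |uCross y| ∂nu ≤ 2 := by
  set z₁ := (z:ℝ×ℝ).1 with hz1
  set z₂ := (z:ℝ×ℝ).2 with hz2
  -- measure lower bound : r ≤ m
  have hfin := nu_ball_ne_top z hr
  set m := (nu (ball z r)).toReal with hmdef
  have hm : r ≤ m := by
    have hge : ENNReal.ofReal r ≤ nu (ball z r) := by
      rw [nu_apply measurableSet_ball]
      rcases z.2 with h | h
      · -- horizontal center: z₂ = 0, so |z₂| < r
        have h2 : |z₂| < r := by rw [hz2, h]; simpa using hr
        calc ENNReal.ofReal r ≤ ENNReal.ofReal (2*r) := ENNReal.ofReal_le_ofReal (by linarith)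
          _ = volume (Ioo (z₁ - r) (z₁ + r)) := by rw [Real.volume_Ioo]; congr 1; ring
          _ = volume (hmap ⁻¹' ball z r) := by rw [hpre_eq h2]
          _ ≤ _ := le_add_right le_rfl
      · -- vertical center: z₁ = 0, z₂ ≤ 1
        have h1 : |z₁| < r := by rw [hz1, h.1]; simpa using hr
        have hsub : Ioo (z₂ - r) z₂ ⊆ wmap ⁻¹' ball z r ∩ Iic 1 := by
          rw [wpre_eq h1]
          rintro t ⟨ha, hb⟩
          exact ⟨⟨ha, by linarith⟩, by rw [mem_Iic]; linarith [h.2]⟩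
        calc ENNReal.ofReal r = volume (Ioo (z₂ - r) z₂) := by rw [Real.volume_Ioo]; congr 1; ring
          _ ≤ volume (wmap ⁻¹' ball z r ∩ Iic 1) := measure_mono hsub
          _ ≤ _ := le_add_left le_rfl
    have := ENNReal.toReal_mono hfin hge
    rwa [ENNReal.toReal_ofReal hr.le] at this
  have hmpos : 0 < m := lt_of_lt_of_le hr hm
  -- integral bounds
  have hI0 : 0 ≤ ∫ t in (wmap ⁻¹' ball z r ∩ Iic 1) ∩ Ioi 0, t ∂volume :=
    setIntegral_nonneg (S_measurable z r) fun t ht => le_of_lt ht.2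
  have hShalf : (wmap ⁻¹' ball z r ∩ Iic 1) ∩ Ioi 0 ⊆ Ioc 0 1 := by
    rintro t ⟨htw, ht0⟩
    exact ⟨ht0, htw.2⟩
  have hIhalf : ∫ t in (wmap ⁻¹' ball z r ∩ Iic 1) ∩ Ioi 0, t ∂volume ≤ 1/2 := by
    calc ∫ t in (wmap ⁻¹' ball z r ∩ Iic 1) ∩ Ioi 0, t ∂volume
        ≤ ∫ t in Ioc 0 1, t ∂volume :=
          setIntegral_mono_set (continuous_id.integrableOn_Ioc)
            ((ae_restrict_iff' measurableSet_Ioc).2 (ae_of_all _ fun x hx => le_of_lt hx.1))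
            (HasSubset.Subset.eventuallyLE hShalf)
      _ = 1/2 := by rw [integral_Ioc_id zero_le_one]; norm_num
  have hvolS : volume ((wmap ⁻¹' ball z r ∩ Iic 1) ∩ Ioi 0) ≤ ENNReal.ofReal (2*r) := by
    calc volume ((wmap ⁻¹' ball z r ∩ Iic 1) ∩ Ioi 0)
        ≤ volume (Ioo (z₂ - r) (z₂ + r)) :=
          measure_mono (subset_trans inter_subset_left wpre_subset)
      _ = ENNReal.ofReal (2*r) := by rw [Real.volume_Ioo]; congr 1; ring
  have hI2r : ∫ t in (wmap ⁻¹' ball z r ∩ Iic 1) ∩ Ioi 0, t ∂volume ≤ 2*r := by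
    have hfinS : volume ((wmap ⁻¹' ball z r ∩ Iic 1) ∩ Ioi 0) < ⊤ :=
      lt_of_le_of_lt hvolS ENNReal.ofReal_lt_top
    calc ∫ t in (wmap ⁻¹' ball z r ∩ Iic 1) ∩ Ioi 0, t ∂volume
        ≤ ∫ _t in (wmap ⁻¹' ball z r ∩ Iic 1) ∩ Ioi 0, (1:ℝ) ∂volume := by
          apply setIntegral_mono_on
          · exact (continuous_id.integrableOn_Ioc).mono_set hShalf
          · exact integrableOn_const hfinS.ne
          · exact S_measurable z r
          · intro t ht; exact (hShalf ht).2
      _ = (volume ((wmap ⁻¹' ball z r ∩ Iic 1) ∩ Ioi 0)).toReal • (1:ℝ) := setIntegral_const 1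
      _ ≤ 2*r := by
          rw [smul_eq_mul, mul_one]
          have := ENNReal.toReal_mono ENNReal.ofReal_ne_top hvolS
          rwa [ENNReal.toReal_ofReal (by linarith)] at this
  -- assemble
  rw [setAverage_eq, integral_ball, smul_eq_mul]
  set I := ∫ t in (wmap ⁻¹' ball z r ∩ Iic 1) ∩ Ioi 0, t ∂volume
  have hrpow0 : 0 ≤ r^α := Real.rpow_nonneg hr.le α
  rcases le_total r 1 with hc | hc
  · have hra : r^α ≤ 1 := Real.rpow_le_one hr.le hc hα0
    have h1 : m⁻¹ * I ≤ r⁻¹ * (2*r) := by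
      apply mul_le_mul (inv_anti₀ hr hm) hI2r hI0 (inv_nonneg.mpr hr.le)
    have h2 : r⁻¹ * (2*r) = 2 := by field_simp
    calc r^α * (m⁻¹ * I) ≤ 1 * (r⁻¹ * (2*r)) :=
          mul_le_mul hra h1 (mul_nonneg (inv_nonneg.mpr hmpos.le) hI0) one_pos.le
      _ = 2 := by rw [h2, one_mul]
  · have hra : r^α ≤ r := by
      have := Real.rpow_le_rpow_of_exponent_le hc hα1
      rwa [Real.rpow_one] at this
    have h1 : m⁻¹ * I ≤ r⁻¹ * (1/2) :=
      mul_le_mul (inv_anti₀ hr hm) hIhalf hI0 (inv_nonneg.mpr hr.le)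
    calc r^α * (m⁻¹ * I) ≤ r * (r⁻¹ * (1/2)) :=
          mul_le_mul hra h1 (mul_nonneg (inv_nonneg.mpr hmpos.le) hI0) (by linarith)
      _ = 1/2 := by field_simp
      _ ≤ 2 := by norm_num

noncomputable def zTop : Cross := ⟨((0:ℝ), (1:ℝ)), Or.inr ⟨rfl, le_refl 1⟩⟩

lemma witness_value {α : ℝ} : (1:ℝ) ^ α * ⨍ y in ball zTop 1, |uCross y| ∂nu = 1/2 := by
  have h1 : |((zTop:ℝ×ℝ)).1| < 1 := by norm_num [zTop]
  have hH : hmap ⁻¹' ball zTop (1:ℝ) = ∅ := hpre_empty (by norm_num [zTop])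
  have hV : wmap ⁻¹' ball zTop (1:ℝ) ∩ Iic 1 = Ioc 0 1 := by
    rw [wpre_eq h1]
    have hz : ((zTop:ℝ×ℝ)).2 = 1 := rfl
    rw [hz]
    ext t
    simp only [mem_inter_iff, mem_Ioo, mem_Iic, mem_Ioc]
    constructor
    · rintro ⟨⟨ha, _⟩, hc⟩; exact ⟨by linarith, hc⟩
    · rintro ⟨ha, hb⟩; exact ⟨⟨by linarith, by linarith⟩, hb⟩
  have hmeas : nu (ball zTop 1) = 1 := by
    rw [nu_apply measurableSet_ball, hH, hV]
    simp [Real.volume_Ioc]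
  have hS : (wmap ⁻¹' ball zTop (1:ℝ) ∩ Iic 1) ∩ Ioi 0 = Ioc 0 1 := by
    rw [hV]
    ext t
    simp only [mem_inter_iff, mem_Ioc, mem_Ioi]
    tauto
  rw [setAverage_eq, integral_ball, hS, integral_Ioc_id zero_le_one, measureReal_def, hmeas, smul_eq_mul,
    Real.one_rpow]
  norm_num

lemma mem_ball_zTop (x : Cross) (hx : 0 < (x:ℝ×ℝ).2) : x ∈ ball zTop 1 := by
  rcases x.2 with h | h
  · rw [h] at hx; exact absurd hx (lt_irrefl 0)
  · rw [mem_ball, Subtype.dist_eq, Prod.dist_eq, max_lt_iff]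
    constructor
    · rw [Real.dist_eq, h.1]
      norm_num [zTop]
    · rw [Real.dist_eq]
      have hz : ((zTop:ℝ×ℝ)).2 = 1 := rfl
      rw [hz, abs_lt]
      exact ⟨by linarith [h.2], by linarith⟩

/-- On the cross `X` with the 1-dimensional Hausdorff measure, for
`0 ≤ α ≤ 1` the noncentered fractional maximal function of the Lipschitz function `u`
satisfies `𝓜̃_α u(0,0) ≤ 1/3` while `𝓜̃_α u(x) ≥ 1/2` whenever `x₂ > 0`; in
particular `𝓜̃_α u` is not continuous at the origin. -/
theorem noncentered_frMax_discontinuous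
    (α : ℝ) (hα0 : 0 ≤ α) (hα1 : α ≤ 1) :
    ncMax (μH[1] : Measure Cross) α uCross ⟨(0, 0), Or.inl rfl⟩ ≤ 1 / 3 ∧
    (∀ x : Cross, 0 < (x : ℝ × ℝ).2 →
      1 / 2 ≤ ncMax (μH[1] : Measure Cross) α uCross x) ∧
    ¬ ContinuousAt (ncMax (μH[1] : Measure Cross) α uCross) ⟨(0, 0), Or.inl rfl⟩ := by
  rw [nu_eq]
  have h13 : ncMax nu α uCross ⟨(0,0), Or.inl rfl⟩ ≤ 1/3 := by
    apply Real.sSup_le _ (by norm_num)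
    rintro v ⟨z, r, hr, hx, rfl⟩
    exact value_le_third hα0 hα1 z r hr hx
  have h12 : ∀ x : Cross, 0 < (x:ℝ×ℝ).2 → 1/2 ≤ ncMax nu α uCross x := by
    intro x hx
    apply le_csSup
    · exact ⟨2, by rintro v ⟨z, r, hr, _, rfl⟩; exact value_le_two hα0 hα1 z r hr⟩
    · exact ⟨zTop, 1, one_pos, mem_ball_zTop x hx, witness_value.symm⟩
  refine ⟨h13, h12, ?_⟩
  intro hcont
  set f := ncMax nu α uCross with hf
  set o : Cross := ⟨(0,0), Or.inl rfl⟩ with ho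
  set seq : ℕ → Cross := fun n =>
    ⟨((0:ℝ), 1/((n:ℝ)+1)), Or.inr ⟨rfl, by
      rw [div_le_one (by positivity)]
      linarith [Nat.cast_nonneg (α := ℝ) n]⟩⟩ with hseqdef
  have hseqpos : ∀ n : ℕ, 0 < ((seq n : ℝ×ℝ)).2 := by
    intro n
    show 0 < 1/((n:ℝ)+1)
    positivity
  have hdist : ∀ n : ℕ, dist (seq n) o = 1/((n:ℝ)+1) := by
    intro n
    rw [Subtype.dist_eq, Prod.dist_eq]
    show max (dist (0:ℝ) 0) (dist (1/((n:ℝ)+1)) 0) = 1/((n:ℝ)+1)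
    rw [dist_self, Real.dist_eq, sub_zero, abs_of_pos (by positivity)]
    exact max_eq_right (by positivity)
  have hseq : Filter.Tendsto seq Filter.atTop (nhds o) := by
    apply tendsto_iff_dist_tendsto_zero.mpr
    simp only [hdist]
    exact tendsto_one_div_add_atTop_nhds_zero_nat
  have hcomp : Filter.Tendsto (f ∘ seq) Filter.atTop (nhds (f o)) :=
    Filter.Tendsto.comp hcont hseq
  have hge : 1/2 ≤ f o :=
    ge_of_tendsto hcomp (Filter.Eventually.of_forall fun n => h12 (seq n) (hseqpos n))
  linarith
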